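/- Let t be a trigonometric polynomial on the circle with Re t > 0, and let ρ(t) = (min Re t)/(2e‖t̂‖₁) and σ(t) = ρ(t)/n(t) where n(t) is the degree of t. If z = e^s e^{2πix} with |s| ≤ σ(t) and P is the Laurent polynomial with t = P(e^{2πi·}), then Re P(z) ≥ (min Re t)/2. -/

import Mathlib

open Complex Filter

set_option maxHeartbeats 1000000

lemma exp_sub_one_abs_le (c v : ℝ) (h : |c| ≤ v) :
    |Real.exp c - 1| ≤ v * Real.exp v := by
  have h0 : 0 ≤ v := le_trans (abs_nonneg c) h
  have h1 : |Real.exp c - 1| ≤ Real.exp |c| - 1 := by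
    rcases le_or_gt 0 c with hc | hc
    · rw [_root_.abs_of_nonneg hc, _root_.abs_of_nonneg (by linarith [Real.one_le_exp hc])]
    · rw [abs_of_neg hc, abs_of_nonpos (by linarith [Real.exp_lt_one_iff.mpr hc])]
      have hmul : Real.exp c * Real.exp (-c) = 1 := by
        rw [← Real.exp_add]; simp
      nlinarith [sq_nonneg (Real.exp c - 1), Real.exp_pos c]
  have h2 : Real.exp |c| - 1 ≤ Real.exp v - 1 := by
    have := Real.exp_le_exp.mpr h; linarith
  have h3 : Real.exp v - 1 ≤ v * Real.exp v := by
    have hmul : Real.exp v * Real.exp (-v) = 1 := by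
      rw [← Real.exp_add]; simp
    nlinarith [Real.add_one_le_exp (-v), Real.exp_pos v]
  linarith

/-- Let `t` be a trigonometric polynomial of degree `n` with `Re t > 0`,
`m = min Re t`, `ρ(t) = m/(2e‖t̂‖₁)` and `σ(t) = ρ(t)/n`. If
`z = e^s e^{2πix}` with `|s| ≤ σ(t)`, then the associated Laurent polynomial
`P` satisfies `Re P(z) ≥ m/2`. -/
theorem laurent_re_bound_on_annulus (n : ℕ) (hn : 1 ≤ n) (a : ℤ → ℂ) (t : ℝ → ℂ)
    (ht : ∀ x : ℝ, t x = ∑ j ∈ Finset.Icc (-(n:ℤ)) (n:ℤ),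
      a j * Complex.exp (2 * (Real.pi : ℂ) * Complex.I * (j : ℂ) * (x : ℂ)))
    (hpos : ∀ x : ℝ, 0 < (t x).re)
    (m : ℝ) (hm : IsLeast {y : ℝ | ∃ x : ℝ, y = (t x).re} m)
    (s x : ℝ)
    (hs : |s| ≤ m / (2 * Real.exp 1 *
        ∑ j ∈ Finset.Icc (-(n:ℤ)) (n:ℤ), ‖a j‖) / n) :
    m / 2 ≤ (∑ j ∈ Finset.Icc (-(n:ℤ)) (n:ℤ),
      a j * ((Real.exp s : ℂ) *
        Complex.exp (2 * (Real.pi : ℂ) * Complex.I * (x : ℂ))) ^ j).re := by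
  set F := Finset.Icc (-(n:ℤ)) (n:ℤ) with hF
  set A : ℝ := ∑ j ∈ F, ‖a j‖ with hA
  -- m > 0
  obtain ⟨x0, hx0⟩ := hm.1
  have hmpos : 0 < m := hx0 ▸ hpos x0
  -- |exp(2πI j x)| = 1
  have habsE : ∀ (j : ℤ) (y : ℝ),
      ‖Complex.exp (2 * (Real.pi : ℂ) * Complex.I * (j : ℂ) * (y : ℂ))‖ = 1 := by
    intro j y
    have : (2 * (Real.pi : ℂ) * Complex.I * (j : ℂ) * (y : ℂ))
        = ((2 * Real.pi * (j : ℝ) * y : ℝ) : ℂ) * Complex.I := by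
      push_cast; ring
    rw [this, Complex.norm_exp_ofReal_mul_I]
  -- m ≤ A
  have hmA : m ≤ A := by
    have h1 : (t x0).re ≤ ‖t x0‖ := Complex.re_le_norm _
    have h2 : ‖t x0‖ ≤ A := by
      rw [ht x0]
      refine le_trans (norm_sum_le _ _) (le_of_eq ?_)
      refine Finset.sum_congr rfl fun j _ => ?_
      rw [norm_mul, habsE, mul_one]
    linarith [hx0 ▸ h1, h2]
  have hApos : 0 < A := lt_of_lt_of_le hmpos hmA
  -- bound on |s| * n
  have hn' : (0:ℝ) < n := by positivity
  have hsn : |s| * n ≤ m / (2 * Real.exp 1 * A) := by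
    have := mul_le_mul_of_nonneg_right hs (le_of_lt hn')
    rwa [div_mul_cancel₀] at this
    exact ne_of_gt hn'
  have hratio : m / (2 * Real.exp 1 * A) ≤ 1 := by
    rw [div_le_one (by positivity)]
    have h1 : (1:ℝ) ≤ Real.exp 1 := Real.one_le_exp zero_le_one
    nlinarith
  -- z ^ j formula
  have hz : ∀ j : ℤ, ((Real.exp s : ℂ) *
      Complex.exp (2 * (Real.pi : ℂ) * Complex.I * (x : ℂ))) ^ j
      = ((Real.exp ((j : ℝ) * s) : ℝ) : ℂ) *
        Complex.exp (2 * (Real.pi : ℂ) * Complex.I * (j : ℂ) * (x : ℂ)) := by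
    intro j
    rw [mul_zpow, Complex.ofReal_exp, ← Complex.exp_int_mul, ← Complex.exp_int_mul,
      Complex.ofReal_exp]
    congr 1
    · congr 1; push_cast; ring
    · congr 1; ring
  -- per-term bound
  have hterm : ∀ j ∈ F, ‖
      (a j * ((Real.exp s : ℂ) *
        Complex.exp (2 * (Real.pi : ℂ) * Complex.I * (x : ℂ))) ^ j
       - a j * Complex.exp (2 * (Real.pi : ℂ) * Complex.I * (j : ℂ) * (x : ℂ)))‖
      ≤ ‖a j‖ * (m / (2 * A)) := by
    intro j hj
    rw [hz j]
    have heq : a j * (((Real.exp ((j : ℝ) * s) : ℝ) : ℂ) *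
        Complex.exp (2 * (Real.pi : ℂ) * Complex.I * (j : ℂ) * (x : ℂ)))
        - a j * Complex.exp (2 * (Real.pi : ℂ) * Complex.I * (j : ℂ) * (x : ℂ))
        = a j * Complex.exp (2 * (Real.pi : ℂ) * Complex.I * (j : ℂ) * (x : ℂ))
          * (((Real.exp ((j : ℝ) * s) : ℝ) : ℂ) - 1) := by ring
    rw [heq, norm_mul, norm_mul, habsE, mul_one]
    refine mul_le_mul_of_nonneg_left ?_ (norm_nonneg _)
    have h1 : ‖(((Real.exp ((j : ℝ) * s) : ℝ) : ℂ) - 1)‖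
        = |Real.exp ((j : ℝ) * s) - 1| := by
      rw [show (((Real.exp ((j : ℝ) * s) : ℝ) : ℂ) - 1)
        = ((Real.exp ((j : ℝ) * s) - 1 : ℝ) : ℂ) by push_cast; ring, Complex.norm_real, Real.norm_eq_abs]
    rw [h1]
    have hjn : |(j : ℝ)| ≤ (n : ℝ) := by
      rw [hF] at hj
      simp only [Finset.mem_Icc] at hj
      rw [abs_le]
      constructor <;> [exact_mod_cast hj.1; exact_mod_cast hj.2]
    have hcb : |(j : ℝ) * s| ≤ |s| * n := by
      rw [abs_mul]
      calc |(j:ℝ)| * |s| ≤ (n:ℝ) * |s| :=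
            mul_le_mul_of_nonneg_right hjn (abs_nonneg s)
        _ = |s| * n := by ring
    have hcb2 : |(j : ℝ) * s| ≤ m / (2 * Real.exp 1 * A) := le_trans hcb hsn
    have := exp_sub_one_abs_le ((j : ℝ) * s) (m / (2 * Real.exp 1 * A)) hcb2
    refine le_trans this ?_
    have hexp : Real.exp (m / (2 * Real.exp 1 * A)) ≤ Real.exp 1 :=
      Real.exp_le_exp.mpr hratio
    have hnn : 0 ≤ m / (2 * Real.exp 1 * A) := by positivity
    calc m / (2 * Real.exp 1 * A) * Real.exp (m / (2 * Real.exp 1 * A))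
        ≤ m / (2 * Real.exp 1 * A) * Real.exp 1 :=
          mul_le_mul_of_nonneg_left hexp hnn
      _ = m / (2 * A) := by
          field_simp
  -- sum bound
  have hsum : ‖
      ((∑ j ∈ F, a j * ((Real.exp s : ℂ) *
        Complex.exp (2 * (Real.pi : ℂ) * Complex.I * (x : ℂ))) ^ j) - t x)‖ ≤ m / 2 := by
    rw [ht x, ← Finset.sum_sub_distrib]
    refine le_trans (norm_sum_le _ _) ?_
    refine le_trans (Finset.sum_le_sum hterm) ?_
    rw [← Finset.sum_mul, ← hA]
    rw [show A * (m / (2 * A)) = m / 2 * (A / A) by ring, div_self (ne_of_gt hApos), mul_one]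
  -- conclude
  have hre : m ≤ (t x).re := hm.2 ⟨x, rfl⟩
  set S := ∑ j ∈ F, a j * ((Real.exp s : ℂ) *
      Complex.exp (2 * (Real.pi : ℂ) * Complex.I * (x : ℂ))) ^ j with hS
  have h1 : |(S - t x).re| ≤ ‖S - t x‖ := Complex.abs_re_le_norm _
  have h2 : S.re = (t x).re + (S - t x).re := by rw [Complex.sub_re]; ring
  have := abs_le.mp (le_trans h1 hsum)
  rw [h2]
  linarith
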